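/- Let C be a finite set of finite words over a finite alphabet, and let (Xₙ)ₙ be a sequence of finite sets of finite words such that each word in Xₙ₊₁ is a concatenation x₁e₁x₂e₂⋯e_{m−1}x_m with xᵢ ∈ Xₙ and eᵢ ∈ C. Suppose that for every n there exists m such that every word in X_m contains every word of Xₙ as a subword. Then the subshift consisting of all bi-infinite sequences whose every finite subword occurs as a subword of some element of ⋃ₙ Xₙ is minimal. -/

import Mathlib

/-- The finite segment `w(i) w(i+1) … w(i+m-1)` of a bi-infinite sequence. -/
def seg {A : Type*} (u : ℤ → A) (i : ℤ) (m : ℕ) : List A :=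
  (List.range m).map fun t => u (i + t)

/-- The subshift generated by a family of finite words: all bi-infinite
sequences each of whose finite subwords is a subword of some member word. -/
def genSubshift {A : Type*} (W : Set (List A)) : Set (ℤ → A) :=
  {u | ∀ (i : ℤ) (m : ℕ), ∃ x ∈ W, (seg u i m).IsInfix x}

/-- The shift orbit of a bi-infinite sequence. -/
def shiftOrbit {A : Type*} (x : ℤ → A) : Set (ℤ → A) :=
  Set.range fun n : ℤ => (fun k => x (k + n))

open List

section Aux

lemma prefix_append_cases {A : Type*} {s a c : List A} (h : s <+: a ++ c) :
    s <+: a ∨ ∃ t, s = a ++ t ∧ t <+: c := by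
  by_cases hl : s.length ≤ a.length
  · exact Or.inl (prefix_of_prefix_length_le h (prefix_append a c) hl)
  · right
    have ha : a <+: s := prefix_of_prefix_length_le (prefix_append a c) h (le_of_not_ge hl)
    obtain ⟨t, rfl⟩ := ha
    refine ⟨t, rfl, ?_⟩
    obtain ⟨r, hr⟩ := h
    exact ⟨r, append_cancel_left (as := a) (by simpa [append_assoc] using hr)⟩

lemma infix_append_cases {A : Type*} {s a c : List A} (h : s <:+: a ++ c) :
    s <:+: a ∨ s <:+: c ∨ ∃ s₁ s₂, s = s₁ ++ s₂ ∧ s₁ <:+ a ∧ s₂ <+: c := by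
  obtain ⟨p, q, hpq⟩ := h
  by_cases h1 : p.length + s.length ≤ a.length
  · left
    have hps : p ++ s <+: a := by
      apply prefix_of_prefix_length_le (l₃ := a ++ c)
      · exact ⟨q, by simpa [append_assoc] using hpq⟩
      · exact prefix_append a c
      · simpa using h1
    obtain ⟨r, hr⟩ := hps
    exact ⟨p, r, by rw [← hr, append_assoc]⟩
  · by_cases h2 : a.length ≤ p.length
    · right; left
      have hsq : s ++ q <:+ c := by
        apply suffix_of_suffix_length_le (l₃ := a ++ c)
        · exact ⟨p, by simpa [append_assoc] using hpq⟩
        · exact suffix_append a c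
        · have hlen := congrArg List.length hpq
          simp only [length_append] at hlen ⊢
          omega
      obtain ⟨r, hr⟩ := hsq
      exact ⟨r, q, by rw [← hr, append_assoc]⟩
    · right; right
      push_neg at h1 h2
      set d : ℕ := a.length - p.length with hd
      have hkey : p ++ take d s ++ (drop d s ++ q) = a ++ c := by
        rw [append_assoc, ← append_assoc (s.take d), take_append_drop, ← append_assoc]
        exact hpq
      have hpa : p ++ s.take d <+: a := by
        apply prefix_of_prefix_length_le (l₃ := a ++ c)
        · exact ⟨s.drop d ++ q, hkey⟩
        · exact prefix_append a c
        · simp [hd]; omega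
      have hpa' : p ++ s.take d = a := by
        apply hpa.eq_of_length
        simp [hd]; omega
      refine ⟨s.take d, s.drop d, (take_append_drop d s).symm, ⟨p, hpa'⟩, ?_⟩
      rw [hpa'] at hkey
      exact ⟨q, append_cancel_left hkey⟩

lemma seg_eq {A : Type*} (u : ℤ → A) (i : ℤ) (m : ℕ) :
    seg u i m = (List.range m).map (fun t : ℕ => u (i + (t : ℤ))) := by
  unfold seg
  induction (List.range m) with
  | nil => rfl
  | cons a l ih => simp_all

lemma seg_length {A : Type*} (u : ℤ → A) (i : ℤ) (m : ℕ) : (seg u i m).length = m := by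
  rw [seg_eq, List.length_map, List.length_range]

lemma seg_append {A : Type*} (u : ℤ → A) (i : ℤ) (a b : ℕ) :
    seg u i (a + b) = seg u i a ++ seg u (i + a) b := by
  rw [seg_eq, seg_eq, seg_eq, List.range_add, List.map_append, List.map_map]
  congr 1
  apply List.map_congr_left
  intro t _
  show u (i + ((a + t : ℕ) : ℤ)) = u (i + a + t)
  congr 1
  push_cast
  ring

lemma seg_getElem {A : Type*} (u : ℤ → A) (i : ℤ) (m : ℕ) (k : ℕ) (h : k < (seg u i m).length) :
    (seg u i m)[k] = u (i + k) := by
  simp [seg_eq]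

lemma seg_infix {A : Type*} {u : ℤ → A} {i : ℤ} {m : ℕ} {w : List A}
    (h : w <:+: seg u i m) : ∃ j : ℤ, w = seg u j w.length := by
  obtain ⟨p, q, hpq⟩ := h
  refine ⟨i + p.length, ?_⟩
  have hm : m = p.length + w.length + q.length := by
    have := congrArg List.length hpq
    simp only [List.length_append, seg_length] at this
    omega
  rw [hm, seg_append, seg_append] at hpq
  have hl1 : (p ++ w).length
      = (seg u i p.length ++ seg u (i + p.length) w.length).length := by
    simp [seg_length]
  have h1 := (append_inj hpq hl1).1
  have hl2 : p.length = (seg u i p.length).length := by simp [seg_length]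
  exact (append_inj h1 hl2).2

lemma seg_eq_pointwise {A : Type*} {u v : ℤ → A} {i j : ℤ} {m : ℕ}
    (h : seg u i m = seg v j m) : ∀ t : ℕ, t < m → u (i + t) = v (j + t) := by
  intro t ht
  have h1 : t < (seg u i m).length := by rw [seg_length]; exact ht
  have h2 : t < (seg v j m).length := by rw [seg_length]; exact ht
  rw [← seg_getElem u i m t h1, ← seg_getElem v j m t h2]
  simp only [h]

lemma key_flatten {A : Type*} (P Q good : List A → Prop)
    (B E L0 : ℕ)
    (hmono : ∀ s t : List A, good s → s <:+: t → good t)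
    (hPgood : ∀ b, P b → good b)
    (hPinfix : ∀ b, P b → ∀ s, s <:+: b → L0 ≤ s.length → good s)
    (hPsuffix : ∀ b, P b → ∀ s : List A, s <:+ b → B < s.length → good s)
    (hPprefix : ∀ b, P b → ∀ s : List A, s <+: b → B < s.length → good s)
    (hQ : ∀ b, Q b → b.length ≤ E)
    (hL0 : 2 * B + E + 2 ≤ L0) :
    ∀ (n : ℕ) (L : List (List A)), L.length ≤ n →
      (∀ (i : ℕ) (h : i < L.length), if Even i then P L[i] else Q L[i]) →
      ∀ s, s <:+: L.flatten → L0 ≤ s.length → good s := by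
  intro n
  induction n with
  | zero =>
    intro L hL _ s hs hlen
    have hLnil : L = [] := List.eq_nil_of_length_eq_zero (Nat.le_zero.mp hL)
    subst hLnil
    rw [flatten_nil] at hs
    have hsnil : s = [] := by simpa using hs
    subst hsnil
    simp at hlen
    omega
  | succ n ih =>
    intro L hL halt s hs hlen
    rcases L with _ | ⟨x, L1⟩
    · rw [flatten_nil] at hs
      have hsnil : s = [] := by simpa using hs
      subst hsnil
      simp at hlen
      omega
    rcases L1 with _ | ⟨e, L2⟩
    · -- L = [x]
      have hPx : P x := by have := halt 0 (by simp); simpa using this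
      have hs' : s <:+: x := by simpa using hs
      exact hPinfix x hPx s hs' hlen
    -- L = x :: e :: L2
    have hPx : P x := by have := halt 0 (by simp); simpa using this
    have hQe : Q e := by
      have := halt 1 (by simp)
      rw [if_neg (by decide)] at this
      simpa using this
    have halt2 : ∀ (i : ℕ) (h : i < L2.length), if Even i then P L2[i] else Q L2[i] := by
      intro i h
      have h' : i + 2 < (x :: e :: L2).length := by simp; omega
      have := halt (i + 2) h'
      simpa [Nat.even_add] using this
    have hlen2 : L2.length ≤ n := by simp at hL; omega
    rw [flatten_cons, flatten_cons] at hs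
    rcases infix_append_cases hs with h | h | ⟨s₁, s₂, rfl, hs1, hs2⟩
    · exact hPinfix x hPx s h hlen
    · rcases infix_append_cases h with h' | h' | ⟨s₁, s₂, rfl, hs1, hs2⟩
      · have h1 := h'.length_le
        have h2 := hQ e hQe
        omega
      · exact ih L2 hlen2 halt2 s h' hlen
      · have h1 : s₁.length ≤ E := le_trans hs1.length_le (hQ e hQe)
        have h2 : B < s₂.length := by
          simp only [length_append, length_nil] at hlen; omega
        rcases L2 with _ | ⟨x', L3⟩
        · have : s₂ = [] := by simpa using hs2
          subst this
          simp at h2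
        · have hPx' : P x' := by have := halt2 0 (by simp); simpa using this
          rw [flatten_cons] at hs2
          rcases prefix_append_cases hs2 with h3 | ⟨t, rfl, ht⟩
          · exact hmono s₂ _ (hPprefix x' hPx' s₂ h3 h2) (suffix_append s₁ s₂).isInfix
          · exact hmono x' _ (hPgood x' hPx')
              ((prefix_append x' t).isInfix.trans (suffix_append s₁ _).isInfix)
    · rcases prefix_append_cases hs2 with h3 | ⟨t, rfl, ht⟩
      · have h4 : s₂.length ≤ E := le_trans h3.length_le (hQ e hQe)
        have h5 : B < s₁.length := by
          simp only [length_append, length_nil] at hlen; omega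
        exact hmono s₁ _ (hPsuffix x hPx s₁ hs1 h5) (prefix_append s₁ s₂).isInfix
      · have hE := hQ e hQe
        rcases L2 with _ | ⟨x', L3⟩
        · have htnil : t = [] := by simpa using ht
          subst htnil
          have h5 : B < s₁.length := by
            simp only [length_append, length_nil] at hlen; omega
          exact hmono s₁ _ (hPsuffix x hPx s₁ hs1 h5) (prefix_append s₁ _).isInfix
        · have hPx' : P x' := by have := halt2 0 (by simp); simpa using this
          rw [flatten_cons] at ht
          rcases prefix_append_cases ht with h3 | ⟨r, rfl, hr⟩
          · by_cases hc : B < s₁.length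
            · exact hmono s₁ _ (hPsuffix x hPx s₁ hs1 hc) (prefix_append s₁ _).isInfix
            · have h6 : B < t.length := by
                simp only [length_append, length_nil] at hlen; omega
              have htinf : t <:+: s₁ ++ (e ++ t) := ⟨s₁ ++ e, [], by simp⟩
              exact hmono t _ (hPprefix x' hPx' t h3 h6) htinf
          · have hinf : x' <:+: s₁ ++ (e ++ (x' ++ r)) :=
              ⟨s₁ ++ e, r, by simp⟩
            exact hmono x' _ (hPgood x' hPx') hinf

end Aux

/-- if each word of `X (n+1)` is a concatenation
`x₁ e₁ x₂ e₂ ⋯ e_{m-1} x_m` with `xᵢ ∈ X n`, `eᵢ ∈ C` (`C` a finite set of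
connectors), and for every `n` there is `m` such that every word of `X m`
contains every word of `X n` as a subword, then the subshift generated by
`⋃ₙ X n` is minimal. -/
theorem subshift_of_substitution_minimal {A : Type*} [Fintype A]
    [TopologicalSpace A] [DiscreteTopology A]
    (C : Set (List A)) (hC : C.Finite)
    (X : ℕ → Set (List A)) (hX : ∀ n, (X n).Finite)
    (hconc : ∀ n, ∀ w ∈ X (n + 1), ∃ L : List (List A),
      w = L.flatten ∧ Odd L.length ∧
      ∀ (i : ℕ) (h : i < L.length), if Even i then L.get ⟨i, h⟩ ∈ X n else L.get ⟨i, h⟩ ∈ C)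
    (hcontain : ∀ n, ∃ m, ∀ z ∈ X m, ∀ x ∈ X n, x.IsInfix z) :
    ∀ u ∈ genSubshift (⋃ n, X n),
      genSubshift (⋃ n, X n) ⊆ closure (shiftOrbit u) := by
  intro u hu v hv
  -- main combinatorial claim: every central word of `v` occurs in `u`
  have main : ∀ N : ℕ, ∃ j : ℤ, ∀ t : ℕ, t < 2 * N + 1 →
      u (j + t) = v (-(N : ℤ) + t) := by
    intro N
    obtain ⟨x, hxW, hwx⟩ := hv (-(N : ℤ)) (2 * N + 1)
    obtain ⟨n₀, hxX⟩ := Set.mem_iUnion.mp hxW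
    obtain ⟨m₀, hm₀⟩ := hcontain n₀
    obtain ⟨B, hB⟩ : ∃ B : ℕ, ∀ y ∈ X m₀, y.length ≤ B := by
      obtain ⟨B, hB⟩ := ((hX m₀).image List.length).bddAbove
      exact ⟨B, fun y hy => hB (Set.mem_image_of_mem _ hy)⟩
    obtain ⟨E, hE⟩ : ∃ E : ℕ, ∀ y ∈ C, y.length ≤ E := by
      obtain ⟨E, hE⟩ := (hC.image List.length).bddAbove
      exact ⟨E, fun y hy => hE (Set.mem_image_of_mem _ hy)⟩
    obtain ⟨B', hB'⟩ : ∃ B' : ℕ, ∀ n, n ≤ m₀ → ∀ y ∈ X n, y.length ≤ B' := by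
      have hfin : (⋃ n ∈ Set.Iic m₀, X n).Finite :=
        Set.Finite.biUnion (Set.finite_Iic m₀) (fun n _ => hX n)
      obtain ⟨B', hB'⟩ := (hfin.image List.length).bddAbove
      exact ⟨B', fun n hn y hy =>
        hB' (Set.mem_image_of_mem _ (Set.mem_biUnion hn hy))⟩
    set L0 : ℕ := 2 * B + E + B' + 2 with hL0def
    set good : List A → Prop := fun s => ∃ z ∈ X m₀, z <:+: s with hgooddef
    have hmono : ∀ s t : List A, good s → s <:+: t → good t :=
      fun s t ⟨z, hz, h⟩ hst => ⟨z, hz, h.trans hst⟩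
    -- every word of a higher level contains a word of level `m₀`
    have chain : ∀ M, m₀ ≤ M → ∀ y ∈ X M, good y := by
      intro M hM
      induction M, hM using Nat.le_induction with
      | base => exact fun y hy => ⟨y, hy, infix_refl y⟩
      | succ M hM ih =>
        intro y hy
        obtain ⟨L, rfl, hodd, halt⟩ := hconc M _ hy
        have hpos : 0 < L.length := hodd.pos
        have hx0 : L[0] ∈ X M := by have := halt 0 hpos; simpa using this
        have h0 : L[0] <:+: L.flatten := by
          rcases L with _ | ⟨b, tl⟩
          · simp at hpos
          · simpa using (prefix_append b tl.flatten).isInfix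
        exact hmono _ _ (ih L[0] hx0) h0
    -- long suffixes of high-level words are good
    have lemA : ∀ M, m₀ ≤ M → ∀ y ∈ X M, ∀ s : List A,
        s <:+ y → B < s.length → good s := by
      intro M hM
      induction M, hM using Nat.le_induction with
      | base =>
        intro y hy s hs hlen
        have h1 := hB y hy
        have h2 := hs.length_le
        omega
      | succ M hM ih =>
        intro y hy s hs hlen
        obtain ⟨L, rfl, hodd, halt⟩ := hconc M _ hy
        have hpos : 0 < L.length := hodd.pos
        have hne : L ≠ [] := List.ne_nil_of_length_pos hpos
        have hlast_even : Even (L.length - 1) := Nat.Odd.sub_odd hodd odd_one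
        have hlt : L.length - 1 < L.length := by omega
        have hxl : L[L.length - 1] ∈ X M := by
          have := halt (L.length - 1) hlt
          rw [if_pos hlast_even] at this
          simpa using this
        have hsplit : L = L.dropLast ++ [L[L.length - 1]] := by
          rw [← List.getLast_eq_getElem hne]
          exact (List.dropLast_append_getLast hne).symm
        have hflat : L.flatten = L.dropLast.flatten ++ L[L.length - 1] := by
          have := congrArg List.flatten hsplit
          rwa [flatten_append, flatten_cons, flatten_nil, append_nil] at this
        have hxlsuf : L[L.length - 1] <:+ L.flatten := by
          rw [hflat]; exact suffix_append _ _
        by_cases hc : s.length ≤ (L[L.length - 1]).length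
        · exact ih _ hxl s (suffix_of_suffix_length_le hs hxlsuf hc) hlen
        · push_neg at hc
          have hsub : L[L.length - 1] <:+ s :=
            suffix_of_suffix_length_le hxlsuf hs hc.le
          exact hmono _ _ (chain M hM _ hxl) hsub.isInfix
    -- long prefixes of high-level words are good
    have lemB : ∀ M, m₀ ≤ M → ∀ y ∈ X M, ∀ s : List A,
        s <+: y → B < s.length → good s := by
      intro M hM
      induction M, hM using Nat.le_induction with
      | base =>
        intro y hy s hs hlen
        have h1 := hB y hy
        have h2 := hs.length_le
        omega
      | succ M hM ih =>
        intro y hy s hs hlen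
        obtain ⟨L, rfl, hodd, halt⟩ := hconc M _ hy
        have hpos : 0 < L.length := hodd.pos
        rcases L with _ | ⟨b, tl⟩
        · simp at hpos
        have hx0 : b ∈ X M := by have := halt 0 hpos; simpa using this
        rw [flatten_cons] at hs
        have hbpre : b <+: b ++ tl.flatten := prefix_append _ _
        by_cases hc : s.length ≤ b.length
        · exact ih _ hx0 s (prefix_of_prefix_length_le hs hbpre hc) hlen
        · push_neg at hc
          have hsub : b <+: s := prefix_of_prefix_length_le hbpre hs hc.le
          have hbinf : b <:+: (b :: tl).flatten := by
            simpa using (prefix_append b tl.flatten).isInfix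
          exact hmono _ _ (chain M hM _ hx0) hsub.isInfix
    -- long infixes of words of any level are good
    have lemC : ∀ M, ∀ y ∈ X M, ∀ s : List A,
        s <:+: y → L0 ≤ s.length → good s := by
      intro M
      induction M with
      | zero =>
        intro y hy s hs hlen
        have h1 := hB' 0 (Nat.zero_le _) y hy
        have h2 := hs.length_le
        omega
      | succ M ihM =>
        intro y hy s hs hlen
        by_cases hle : M + 1 ≤ m₀
        · have h1 := hB' (M + 1) hle y hy
          have h2 := hs.length_le
          omega
        · have hM : m₀ ≤ M := by omega
          obtain ⟨L, rfl, hodd, halt⟩ := hconc M _ hy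
          have halt' : ∀ (i : ℕ) (h : i < L.length),
              if Even i then L[i] ∈ X M else L[i] ∈ C := by
            intro i h
            have := halt i h
            simpa using this
          exact key_flatten (· ∈ X M) (· ∈ C) good B E L0 hmono
            (fun b hb => chain M hM b hb)
            (fun b hb => ihM b hb)
            (fun b hb => lemA M hM b hb)
            (fun b hb => lemB M hM b hb)
            (fun b hb => hE b hb)
            (by omega)
            L.length L (le_refl _) halt' s hs hlen
    -- apply to a long segment of u
    obtain ⟨y, hyW, hsy⟩ := hu 0 L0
    obtain ⟨M, hyX⟩ := Set.mem_iUnion.mp hyW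
    have hgood : good (seg u 0 L0) :=
      lemC M y hyX _ hsy (le_of_eq (seg_length u 0 L0).symm)
    obtain ⟨z, hz, hzs⟩ := hgood
    have hws : seg v (-(N : ℤ)) (2 * N + 1) <:+: seg u 0 L0 :=
      (hwx.trans (hm₀ z hz x hxX)).trans hzs
    obtain ⟨j, hj⟩ := seg_infix hws
    rw [seg_length] at hj
    refine ⟨j, fun t ht => ?_⟩
    exact (seg_eq_pointwise hj t ht).symm
  -- topological conclusion
  rw [mem_closure_iff_nhds]
  intro t ht
  rw [nhds_pi, Filter.mem_pi] at ht
  obtain ⟨I, hIfin, f, hf, hsub⟩ := ht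
  obtain ⟨N, hN⟩ : ∃ N : ℕ, ∀ k ∈ I, k.natAbs ≤ N := by
    obtain ⟨N, hN⟩ := (hIfin.image Int.natAbs).bddAbove
    exact ⟨N, fun k hk => hN (Set.mem_image_of_mem _ hk)⟩
  obtain ⟨j, hj⟩ := main N
  refine ⟨fun k => u (k + (j + N)), ?_, ⟨j + N, rfl⟩⟩
  apply hsub
  rw [Set.mem_pi]
  intro k hk
  have hvk : v k ∈ f k := mem_of_mem_nhds (hf k)
  have heq : u (k + (j + N)) = v k := by
    have hk' : k.natAbs ≤ N := hN k hk
    set s : ℕ := (k + N).toNat with hs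
    have hs1 : (s : ℤ) = k + N := Int.toNat_of_nonneg (by omega)
    have hs2 : s < 2 * N + 1 := by omega
    have := hj s hs2
    rw [show j + (s : ℤ) = k + (j + N) by omega,
        show -(N : ℤ) + s = k by omega] at this
    exact this
  rw [heq]
  exact hvk
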